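/- Suppose each zero-superlevel set S_i := {x : b_i(x) ≥ 0} satisfies S_i ⊆ S_u(t) for all t in [iT, (i+N+1)T]. Then for every k ∈ ℕ and every t ∈ [kT, (k+1)T], the set S_ψ(t) := {x : ψ₀(t,x) ≥ 0}, where ψ₀ is the time-varying soft-maximum composition of b_{k−N},...,b_k (as defined below), satisfies S_ψ(t) ⊆ ∪_{i=k−N}^{k} S_i ⊆ S_u(t). -/
import Mathlib


open Real Finset

/-- The `N` arguments of the time-varying soft-maximum composition on `[kT,(k+1)T)`:
`b_{k-1}(x), ..., b_{k-N+1}(x)` together with the convex combination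
`η(t/T-k) b_k(x) + (1-η(t/T-k)) b_{k-N}(x)`.  Here `b : ℕ → _` with natural-number
(truncated) subtraction realizing the convention `b_{-i} := b_0`. -/
noncomputable def psiArgs (n N : ℕ) (T : ℝ) (η : ℝ → ℝ) (b : ℕ → (Fin n → ℝ) → ℝ)
    (k : ℕ) (t : ℝ) (x : Fin n → ℝ) : Fin N → ℝ :=
  fun i => if (i : ℕ) + 1 < N then b (k - 1 - i) x
    else η (t / T - k) * b k x + (1 - η (t / T - k)) * b (k - N) x

theorem time_varying_softmax_safe (n N : ℕ) (hN : 0 < N) (T κ : ℝ) (hT : 0 < T) (hκ : 0 < κ)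
    (b : ℕ → (Fin n → ℝ) → ℝ) (hb : ∀ i, Continuous (b i))
    (Su : ℝ → Set (Fin n → ℝ))
    (η : ℝ → ℝ) (hη01 : ∀ s, 0 ≤ η s ∧ η s ≤ 1)
    (hη0 : ∀ s ≤ (0 : ℝ), η s = 0) (hη1 : ∀ s, (1 : ℝ) ≤ s → η s = 1)
    (hsafe : ∀ i : ℕ, ∀ t : ℝ, (i : ℝ) * T ≤ t → t ≤ ((i : ℝ) + N + 1) * T →
      ∀ x, 0 ≤ b i x → x ∈ Su t) :
    ∀ k : ℕ, ∀ t : ℝ, (k : ℝ) * T ≤ t → t ≤ ((k : ℝ) + 1) * T → ∀ x : Fin n → ℝ,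
      (0 ≤ (1 / κ) * Real.log (∑ i, Real.exp (κ * psiArgs n N T η b k t x i)) - Real.log N / κ →
        (∃ j ≤ N, 0 ≤ b (k - j) x)) ∧
      (∀ y : Fin n → ℝ, (∃ j ≤ N, 0 ≤ b (k - j) y) → y ∈ Su t) := by
  intro k t hkt htk x
  haveI : NeZero N := ⟨hN.ne'⟩
  constructor
  · intro h
    set S := ∑ i, Real.exp (κ * psiArgs n N T η b k t x i) with hSdef
    have hSpos : 0 < S := Finset.sum_pos (fun i _ => Real.exp_pos _)
      (Finset.univ_nonempty)
    have hlog : Real.log N ≤ Real.log S := by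
      have h' : 0 ≤ (1 / κ) * (Real.log S - Real.log N) := by ring_nf; ring_nf at h; linarith
      by_contra hcon
      push_neg at hcon
      have : (1 / κ) * (Real.log S - Real.log N) < 0 :=
        mul_neg_of_pos_of_neg (by positivity) (by linarith)
      linarith
    have hNS : (N : ℝ) ≤ S := by
      have := Real.exp_le_exp.mpr hlog
      rwa [Real.exp_log (by exact_mod_cast hN), Real.exp_log hSpos] at this
    obtain ⟨i, hi⟩ : ∃ i, 0 ≤ psiArgs n N T η b k t x i := by
      by_contra hc
      push_neg at hc
      have hlt : S < ∑ _i : Fin N, (1 : ℝ) := by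
        apply Finset.sum_lt_sum_of_nonempty Finset.univ_nonempty
        intro i _
        have h1 : κ * psiArgs n N T η b k t x i < 0 :=
          mul_neg_of_pos_of_neg hκ (hc i)
        calc Real.exp (κ * psiArgs n N T η b k t x i) < Real.exp 0 :=
              Real.exp_lt_exp.mpr h1
          _ = 1 := Real.exp_zero
      simp only [Finset.sum_const, Finset.card_univ, Fintype.card_fin, nsmul_eq_mul,
        mul_one] at hlt
      linarith
    unfold psiArgs at hi
    by_cases hcase : (i : ℕ) + 1 < N
    · rw [if_pos hcase] at hi
      refine ⟨(i : ℕ) + 1, le_of_lt hcase, ?_⟩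
      have : k - 1 - (i : ℕ) = k - ((i : ℕ) + 1) := by omega
      rwa [this] at hi
    · rw [if_neg hcase] at hi
      obtain ⟨hη0', hη1'⟩ := hη01 (t / T - k)
      by_cases hbk : 0 ≤ b k x
      · exact ⟨0, Nat.zero_le _, by simpa using hbk⟩
      · refine ⟨N, le_refl _, ?_⟩
        by_contra hbkN
        push_neg at hbk hbkN
        nlinarith [mul_nonneg hη0' (le_of_lt (neg_pos.mpr hbk)),
          mul_nonneg (by linarith : (0:ℝ) ≤ 1 - η (t / T - k)) (le_of_lt (neg_pos.mpr hbkN))]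
  · rintro y ⟨j, hjN, hby⟩
    apply hsafe (k - j) t _ _ y hby
    · have h1 : ((k - j : ℕ) : ℝ) ≤ (k : ℝ) := by exact_mod_cast Nat.sub_le k j
      calc ((k - j : ℕ) : ℝ) * T ≤ (k : ℝ) * T := by nlinarith
        _ ≤ t := hkt
    · have h2 : k ≤ (k - j) + N := by omega
      have h2' : (k : ℝ) + 1 ≤ ((k - j : ℕ) : ℝ) + N + 1 := by
        have : (k : ℝ) ≤ ((k - j : ℕ) : ℝ) + N := by exact_mod_cast h2
        linarith
      calc t ≤ ((k : ℝ) + 1) * T := htk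
        _ ≤ (((k - j : ℕ) : ℝ) + N + 1) * T := by nlinarith
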